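/- Every element of the ℤ-submodule of ℚ[q,q⁻¹] generated by the half quantum integers admits a unique positive normal form: if P ∈ ℚ[q,q⁻¹] is a ℤ-linear combination of the elements (1/2)·[m]_q (m ∈ ℤ), then there exists a unique finitely supported function n : ℤ → ℚ such that every value n_m is a nonnegative half-integer (i.e. 2·n_m is a nonnegative integer), n_0 = 0, for every m ∈ ℤ the implication (n_m > 0 → n_{−m} = 0) holds, and P = Σ_{m∈ℤ} n_m·[m]_q. -/

import Mathlib

open LaurentPolynomial

private noncomputable def Dq : LaurentPolynomial ℚ := T 1 - T (-1)

private noncomputable def cf (k : ℤ) : LaurentPolynomial ℚ →ₗ[ℤ] ℚ :=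
  ((Finsupp.applyAddHom k).comp ((AddMonoidAlgebra.coeffAddEquiv : LaurentPolynomial ℚ ≃+ (ℤ →₀ ℚ)).toAddMonoidHom.comp (AddMonoidHom.mulLeft Dq))).toIntLinearMap

private lemma cf_apply (k : ℤ) (P : LaurentPolynomial ℚ) :
    cf k P = (Dq * P).coeff k := rfl

private lemma smul_T_eq (c : ℚ) (m : ℤ) :
    c • (T m : LaurentPolynomial ℚ) = AddMonoidAlgebra.single m c := by
  rw [single_eq_C_mul_T, ← smul_eq_mul, ← algebraMap_smul (LaurentPolynomial ℚ) c,
    LaurentPolynomial.algebraMap_apply]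
  simp

private lemma Dq_ne_zero : Dq ≠ 0 := by
  intro h
  have h1 : (Dq).coeff 1 = 1 := by
    show ((AddMonoidAlgebra.single (1:ℤ) (1:ℚ) - AddMonoidAlgebra.single (-1) 1 : LaurentPolynomial ℚ)).coeff 1 = 1
    rw [AddMonoidAlgebra.coeff_sub, Finsupp.sub_apply, AddMonoidAlgebra.coeff_single, AddMonoidAlgebra.coeff_single]
    simp [Finsupp.single_apply]
  rw [h] at h1
  simp at h1

private lemma cf_smul_qI (qI : ℤ → LaurentPolynomial ℚ)
    (hqI : ∀ m : ℤ, Dq * qI m = T m - T (-m)) (k m : ℤ) (c : ℚ) :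
    cf k (c • qI m) = (if m = k then c else 0) - (if m = -k then c else 0) := by
  have h : Dq * (c • qI m) = AddMonoidAlgebra.single m c - AddMonoidAlgebra.single (-m) c := by
    rw [mul_smul_comm, hqI, smul_sub, smul_T_eq, smul_T_eq]
  rw [cf_apply, h]
  show ((AddMonoidAlgebra.single m c - AddMonoidAlgebra.single (-m) c : LaurentPolynomial ℚ)).coeff k = _
  rw [AddMonoidAlgebra.coeff_sub, Finsupp.sub_apply, AddMonoidAlgebra.coeff_single, AddMonoidAlgebra.coeff_single, Finsupp.single_apply, Finsupp.single_apply]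
  congr 1
  simp [neg_eq_iff_eq_neg]

private lemma sum_ite_self (n : ℤ →₀ ℚ) (a : ℤ) :
    (n.sum fun x v => if x = a then v else 0) = n a := by
  rw [Finsupp.sum_ite_eq' n a fun _ v => v]
  split
  · rfl
  · exact (Finsupp.notMem_support_iff.mp (by assumption)).symm

private lemma cf_sum (qI : ℤ → LaurentPolynomial ℚ)
    (hqI : ∀ m : ℤ, Dq * qI m = T m - T (-m))
    (n : ℤ →₀ ℚ) (k : ℤ) :
    cf k (n.sum fun m c => c • qI m) = n k - n (-k) := by
  rw [map_finsuppSum]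
  have : (n.sum fun m c => cf k (c • qI m)) =
      n.sum fun m c => (if m = k then c else 0) - (if m = -k then c else 0) := by
    apply Finsupp.sum_congr
    intro m _
    exact cf_smul_qI qI hqI k m (n m)
  rw [this, Finsupp.sum_sub, sum_ite_self, sum_ite_self]

private lemma eq_sum_of_cf (qI : ℤ → LaurentPolynomial ℚ)
    (hqI : ∀ m : ℤ, Dq * qI m = T m - T (-m))
    (P : LaurentPolynomial ℚ) (n : ℤ →₀ ℚ)
    (h : ∀ k, cf k P = n k - n (-k)) :
    P = n.sum fun m c => c • qI m := by
  apply mul_left_cancel₀ Dq_ne_zero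
  apply AddMonoidAlgebra.ext
  apply Finsupp.ext
  intro k
  have h1 : cf k P = cf k (n.sum fun m c => c • qI m) := by
    rw [h k, cf_sum qI hqI]
  exact h1

private lemma cf_props (qI : ℤ → LaurentPolynomial ℚ)
    (hqI : ∀ m : ℤ, Dq * qI m = T m - T (-m))
    (P : LaurentPolynomial ℚ)
    (hP : P ∈ Submodule.span ℤ (Set.range fun m : ℤ => (2⁻¹ : ℚ) • qI m)) :
    ∀ k : ℤ, cf (-k) P = - cf k P ∧ ∃ z : ℤ, 2 * cf k P = (z : ℚ) := by
  induction hP using Submodule.span_induction with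
  | mem x hx =>
    obtain ⟨m, rfl⟩ := hx
    intro k
    rw [cf_smul_qI qI hqI, cf_smul_qI qI hqI]
    rcases eq_or_ne m k with h1 | h1 <;> rcases eq_or_ne m (-k) with h2 | h2
    · have h3 : k = -k := h1.symm.trans h2
      exact ⟨by simp [h1, h2, ← h3], 0, by simp [h1, h2, ← h3]⟩
    · have h3 : ¬ k = -k := fun h => h2 (h1.trans h)
      exact ⟨by simp [h1, h2, h3], 1, by simp [h1, h2, h3]⟩
    · have h3 : ¬ k = -k := fun h => h1 (h2.trans h.symm)
      have h4 : ¬ -k = k := fun h => h3 h.symm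
      refine ⟨by simp [h1, h2, h3, h4], -1, ?_⟩
      simp [h1, h2, h3, h4]
    · exact ⟨by simp [h1, h2], 0, by simp [h1, h2]⟩
  | zero => exact fun k => ⟨by simp, 0, by simp⟩
  | add x y hx hy ihx ihy =>
    intro k
    obtain ⟨ha, za, hza⟩ := ihx k
    obtain ⟨hb, zb, hzb⟩ := ihy k
    refine ⟨by rw [map_add, map_add, ha, hb]; ring, za + zb, ?_⟩
    rw [map_add]
    push_cast
    linarith
  | smul a x hx ih =>
    intro k
    obtain ⟨ha, z, hz⟩ := ih k
    refine ⟨by rw [map_smul, map_smul, ha, smul_neg], a * z, ?_⟩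
    rw [map_smul, zsmul_eq_mul]
    push_cast
    rw [← hz]
    ring

/-- Unique positive normal form: every element `P` of the `ℤ`-submodule of `ℚ[q,q⁻¹]`
generated by the half quantum integers `(1/2)·[m]_q` can be written uniquely as
`P = ∑_m n_m · [m]_q` where each `n_m` is a nonnegative half-integer, `n_0 = 0`,
and `n_m > 0 → n_{-m} = 0`. Here `qI : ℤ → ℚ[q,q⁻¹]` is the family of quantum
integers, characterized by `(q - q⁻¹) * qI m = q^m - q^(-m)`. -/
theorem half_quantum_integer_combination_normal_form
    (qI : ℤ → LaurentPolynomial ℚ)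
    (hqI : ∀ m : ℤ, ((T 1 : LaurentPolynomial ℚ) - T (-1)) * qI m = T m - T (-m))
    (P : LaurentPolynomial ℚ)
    (hP : P ∈ Submodule.span ℤ (Set.range fun m : ℤ => (2⁻¹ : ℚ) • qI m)) :
    ∃! n : ℤ →₀ ℚ,
      (∀ m : ℤ, ∃ k : ℕ, 2 * n m = (k : ℚ)) ∧
      n 0 = 0 ∧
      (∀ m : ℤ, 0 < n m → n (-m) = 0) ∧
      P = n.sum fun m c => c • qI m := by
  have hqI' : ∀ m : ℤ, Dq * qI m = T m - T (-m) := hqI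
  have hprops := cf_props qI hqI' P hP
  have hanti : ∀ k : ℤ, cf (-k) P = - cf k P := fun k => (hprops k).1
  have hhalf : ∀ k : ℤ, ∃ z : ℤ, 2 * cf k P = (z : ℚ) := fun k => (hprops k).2
  -- the normal form
  set N : ℤ →₀ ℚ :=
    Finsupp.mapRange (fun x => max x 0) (by simp) (Dq * P).coeff with hN
  have hNval : ∀ k : ℤ, N k = max (cf k P) 0 := fun k => Finsupp.mapRange_apply
  have hc0 : cf 0 P = 0 := by
    have := hanti 0
    rw [neg_zero] at this
    linarith
  refine ⟨N, ⟨?_, ?_, ?_, ?_⟩, ?_⟩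
  · -- nonneg half-integers
    intro m
    obtain ⟨z, hz⟩ := hhalf m
    rcases le_or_gt 0 (cf m P) with h | h
    · refine ⟨z.toNat, ?_⟩
      have hz0 : (0 : ℚ) ≤ z := by rw [← hz]; linarith
      rw [hNval, max_eq_left h, hz]
      have hz1 : (0:ℤ) ≤ z := by exact_mod_cast hz0
      norm_cast
      omega
    · exact ⟨0, by rw [hNval, max_eq_right h.le]; simp⟩
  · rw [hNval, hc0, max_self]
  · intro m hm
    rw [hNval] at hm
    have h1 : 0 < cf m P := by
      rcases le_or_gt (cf m P) 0 with h | h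
      · rw [max_eq_right h] at hm; exact absurd hm (lt_irrefl 0)
      · exact h
    rw [hNval, hanti, max_eq_right (by linarith)]
  · refine eq_sum_of_cf qI hqI' P N fun k => ?_
    rw [hNval, hNval, hanti]
    rcases le_total 0 (cf k P) with h | h
    · rw [max_eq_left h, max_eq_right (by linarith), sub_zero]
    · rw [max_eq_right h, max_eq_left (by linarith)]; ring
  · -- uniqueness
    rintro n' ⟨h1, h2, h3, h4⟩
    have hnonneg : ∀ m : ℤ, 0 ≤ n' m := by
      intro m
      obtain ⟨j, hj⟩ := h1 m
      have : (0:ℚ) ≤ (j:ℚ) := Nat.cast_nonneg j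
      linarith
    have hcf : ∀ k : ℤ, cf k P = n' k - n' (-k) := by
      intro k
      rw [h4, cf_sum qI hqI']
    apply Finsupp.ext
    intro k
    rw [hNval, hcf]
    rcases eq_or_lt_of_le (hnonneg (-k)) with h | h
    · rw [← h, sub_zero, max_eq_left (hnonneg k)]
    · have hk0 : n' k = 0 := by
        have := h3 (-k) h
        rwa [neg_neg] at this
      rw [hk0, zero_sub, max_eq_right (by linarith)]
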